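/- Let X be a topological space with a continuous ℤ/2 action such that the homology H_*(X; ℤ/2) is finite-dimensional and X is a finite ℤ/2-CW complex. Then the total dimension of H_*(X^{ℤ/2}; ℤ/2), where X^{ℤ/2} is the fixed-point set, is at most the total dimension of H_*(X; ℤ/2) (the Smith inequality). -/
import Mathlib

open Module Submodule LinearMap

section SmithHelpers

variable {𝕜 : Type*} [Field 𝕜]

private lemma smith_finrank_comap_subtype {V : Type*} [AddCommGroup V] [Module 𝕜 V]
    [FiniteDimensional 𝕜 V] (p q : Submodule 𝕜 V) :
    finrank 𝕜 (q.comap p.subtype) = finrank 𝕜 ↥(q ⊓ p) := by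
  have h : q.comap p.subtype = (q ⊓ p).comap p.subtype := by
    ext x; simp [Submodule.mem_comap, x.2]
  rw [h]
  exact (Submodule.comapSubtypeEquivOfLe inf_le_right).finrank_eq

private lemma smith_RN {V W : Type*} [AddCommGroup V] [Module 𝕜 V]
    [AddCommGroup W] [Module 𝕜 W] [FiniteDimensional 𝕜 V]
    (f : V →ₗ[𝕜] W) (p : Submodule 𝕜 V) :
    finrank 𝕜 (p.map f) + finrank 𝕜 ↥(ker f ⊓ p) = finrank 𝕜 p := by
  have h := LinearMap.finrank_range_add_finrank_ker (f.domRestrict p)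
  rwa [LinearMap.range_domRestrict, LinearMap.ker_domRestrict,
    smith_finrank_comap_subtype] at h

private lemma smith_quot_formula {V W U : Type*} [AddCommGroup V] [Module 𝕜 V]
    [AddCommGroup W] [Module 𝕜 W] [AddCommGroup U] [Module 𝕜 U] [FiniteDimensional 𝕜 V]
    (f : V →ₗ[𝕜] W) (g : U →ₗ[𝕜] V) (hfg : f.comp g = 0) :
    finrank 𝕜 (↥(ker f) ⧸ (range g).comap (ker f).subtype) + finrank 𝕜 (range g)
      = finrank 𝕜 (ker f) := by
  have h1 := Submodule.finrank_quotient_add_finrank ((range g).comap (ker f).subtype)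
  have h2 : finrank 𝕜 ((range g).comap (ker f).subtype) = finrank 𝕜 (range g) :=
    (Submodule.comapSubtypeEquivOfLe (LinearMap.range_le_ker_iff.mpr hfg)).finrank_eq
  omega

private lemma smith_quot_formula_restrict {V W U : Type*} [AddCommGroup V] [Module 𝕜 V]
    [AddCommGroup W] [Module 𝕜 W] [AddCommGroup U] [Module 𝕜 U]
    [FiniteDimensional 𝕜 V] [FiniteDimensional 𝕜 U]
    (f : V →ₗ[𝕜] W) (g : U →ₗ[𝕜] V) (hfg : f.comp g = 0)
    {pV : Submodule 𝕜 V} {pW : Submodule 𝕜 W} {pU : Submodule 𝕜 U}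
    (hf : ∀ x ∈ pV, f x ∈ pW) (hg : ∀ x ∈ pU, g x ∈ pV) :
    finrank 𝕜 (↥(ker (f.restrict hf)) ⧸
        (range (g.restrict hg)).comap (ker (f.restrict hf)).subtype)
      + finrank 𝕜 (pU.map g) = finrank 𝕜 ↥(ker f ⊓ pV) := by
  have hle : range (g.restrict hg) ≤ ker (f.restrict hf) := by
    rintro y ⟨x, rfl⟩
    have hx : f (g ↑x) = 0 := LinearMap.congr_fun hfg (x : U)
    simp only [LinearMap.mem_ker]
    ext
    simpa [LinearMap.restrict_apply] using hx
  have h1 := Submodule.finrank_quotient_add_finrank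
    ((range (g.restrict hg)).comap (ker (f.restrict hf)).subtype)
  have h2 : finrank 𝕜 ((range (g.restrict hg)).comap (ker (f.restrict hf)).subtype)
      = finrank 𝕜 (range (g.restrict hg)) := (Submodule.comapSubtypeEquivOfLe hle).finrank_eq
  have h3 : finrank 𝕜 (ker (f.restrict hf)) = finrank 𝕜 ↥(ker f ⊓ pV) := by
    rw [LinearMap.ker_restrict hf, smith_finrank_comap_subtype]
  have h4 : finrank 𝕜 (range (g.restrict hg)) = finrank 𝕜 (pU.map g) := by
    have a := LinearMap.finrank_range_add_finrank_ker (g.restrict hg)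
    have b := smith_RN g pU
    have c : finrank 𝕜 (ker (g.restrict hg)) = finrank 𝕜 ↥(ker g ⊓ pU) := by
      rw [LinearMap.ker_restrict hg, smith_finrank_comap_subtype]
    omega
  omega

/-- The key Smith-theory rank inequality at a single degree, coming from the long exact
sequence of `0 → ker σ → C → σC → 0` (here stated purely in linear algebra). -/
private lemma smith_key_ineq {V1 V2 V3 V4 : Type*}
    [AddCommGroup V1] [Module 𝕜 V1] [AddCommGroup V2] [Module 𝕜 V2]
    [AddCommGroup V3] [Module 𝕜 V3] [AddCommGroup V4] [Module 𝕜 V4]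
    [FiniteDimensional 𝕜 V2] [FiniteDimensional 𝕜 V3]
    (d1 : V2 →ₗ[𝕜] V1) (d2 : V3 →ₗ[𝕜] V2) (d3 : V4 →ₗ[𝕜] V3)
    (σ1 : V1 →ₗ[𝕜] V1) (σ2 : V2 →ₗ[𝕜] V2) (σ3 : V3 →ₗ[𝕜] V3) (σ4 : V4 →ₗ[𝕜] V4)
    (F1 : Submodule 𝕜 V1) (F2 : Submodule 𝕜 V2) (F3 : Submodule 𝕜 V3)
    (hdd1 : d1.comp d2 = 0) (hdd2 : d2.comp d3 = 0)
    (hcom1 : d1.comp σ2 = σ1.comp d1) (hcom2 : d2.comp σ3 = σ2.comp d2)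
    (hcom3 : d3.comp σ4 = σ3.comp d3)
    (hK2 : ker σ2 = F2 ⊔ range σ2) (hK3 : ker σ3 = F3 ⊔ range σ3)
    (hFS1 : F1 ⊓ range σ1 = ⊥) (hFS2 : F2 ⊓ range σ2 = ⊥)
    (hdF1 : ∀ x ∈ F2, d1 x ∈ F1) (hdF2 : ∀ x ∈ F3, d2 x ∈ F2) :
    finrank 𝕜 ↥(ker d1 ⊓ F2) + finrank 𝕜 ↥(ker d1 ⊓ range σ2)
      + finrank 𝕜 ((range σ4).map d3) + finrank 𝕜 (range d2)
    ≤ finrank 𝕜 (ker d1) + finrank 𝕜 (F3.map d2) + finrank 𝕜 ((range σ3).map d2)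
      + finrank 𝕜 ↥(ker d2 ⊓ range σ3) := by
  have hdS1 : ∀ x ∈ range σ2, d1 x ∈ range σ1 := by
    rintro _ ⟨y, rfl⟩; exact ⟨d1 y, (LinearMap.congr_fun hcom1 y).symm⟩
  have P1set : ker d1 ⊓ ker σ2 = (ker d1 ⊓ F2) ⊔ (ker d1 ⊓ range σ2) := by
    apply le_antisymm
    · rintro x hx
      obtain ⟨hxd, hxσ⟩ := Submodule.mem_inf.mp hx
      have hxσ' : x ∈ F2 ⊔ range σ2 := hK2 ▸ hxσ
      obtain ⟨y, hy, z, hz, rfl⟩ := Submodule.mem_sup.mp hxσ'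
      have hsum : d1 y + d1 z = 0 := by
        rw [← map_add]; exact LinearMap.mem_ker.mp hxd
      have hy0 : d1 y = 0 := by
        have h1 : d1 y ∈ F1 ⊓ range σ1 := by
          refine Submodule.mem_inf.mpr ⟨hdF1 y hy, ?_⟩
          rw [eq_neg_of_add_eq_zero_left hsum]
          exact (range σ1).neg_mem (hdS1 z hz)
        rw [hFS1] at h1; simpa using h1
      have hz0 : d1 z = 0 := by rwa [hy0, zero_add] at hsum
      exact Submodule.mem_sup.mpr ⟨y, Submodule.mem_inf.mpr ⟨LinearMap.mem_ker.mpr hy0, hy⟩,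
        z, Submodule.mem_inf.mpr ⟨LinearMap.mem_ker.mpr hz0, hz⟩, rfl⟩
    · refine sup_le (inf_le_inf_left _ ?_) (inf_le_inf_left _ ?_)
      · rw [hK2]; exact le_sup_left
      · rw [hK2]; exact le_sup_right
  have P1 : finrank 𝕜 ↥(ker d1 ⊓ F2) + finrank 𝕜 ↥(ker d1 ⊓ range σ2)
      = finrank 𝕜 ↥(ker d1 ⊓ ker σ2) := by
    have hb : (ker d1 ⊓ F2) ⊓ (ker d1 ⊓ range σ2) = ⊥ := by
      rw [eq_bot_iff, ← hFS2]
      exact le_trans (inf_le_inf inf_le_right inf_le_right) le_rfl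
    have h := Submodule.finrank_sup_add_finrank_inf_eq (ker d1 ⊓ F2) (ker d1 ⊓ range σ2)
    rw [hb, ← P1set] at h
    simpa using h.symm
  have hdS2 : (range σ3).map d2 ≤ range σ2 := by
    rintro _ ⟨_, ⟨y, rfl⟩, rfl⟩; exact ⟨d2 y, (LinearMap.congr_fun hcom2 y).symm⟩
  have hdF2' : F3.map d2 ≤ F2 := by rintro _ ⟨x, hx, rfl⟩; exact hdF2 x hx
  have P2 : finrank 𝕜 (F3.map d2) + finrank 𝕜 ((range σ3).map d2)
      = finrank 𝕜 ((ker σ3).map d2) := by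
    have hsup : (ker σ3).map d2 = F3.map d2 ⊔ (range σ3).map d2 := by
      rw [hK3, Submodule.map_sup]
    have hb : (F3.map d2) ⊓ ((range σ3).map d2) = ⊥ := by
      rw [eq_bot_iff, ← hFS2]; exact inf_le_inf hdF2' hdS2
    have h := Submodule.finrank_sup_add_finrank_inf_eq (F3.map d2) ((range σ3).map d2)
    rw [hb, ← hsup] at h
    simpa using h.symm
  have hrange2 : range d2 ≤ ker d1 := LinearMap.range_le_ker_iff.mpr hdd1
  have step3 : finrank 𝕜 ↥(ker d1 ⊓ ker σ2) + finrank 𝕜 (range d2)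
      ≤ finrank 𝕜 (ker d1) + finrank 𝕜 ↥(ker σ2 ⊓ range d2) := by
    have h := Submodule.finrank_sup_add_finrank_inf_eq (ker d1 ⊓ ker σ2) (range d2)
    have h2 : (ker d1 ⊓ ker σ2) ⊔ range d2 ≤ ker d1 := sup_le inf_le_left hrange2
    have h3 : (ker d1 ⊓ ker σ2) ⊓ range d2 = ker σ2 ⊓ range d2 := by
      rw [inf_assoc]
      exact inf_eq_right.mpr (le_trans inf_le_right hrange2)
    have h4 := Submodule.finrank_mono h2
    rw [h3] at h
    omega
  have e1 := smith_RN σ3 ((ker σ2).comap d2)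
  have hK3T : ker σ3 ⊓ (ker σ2).comap d2 = ker σ3 := by
    rw [inf_eq_left]
    intro x hx
    have hx0 : σ3 x = 0 := LinearMap.mem_ker.mp hx
    have h := LinearMap.congr_fun hcom2 x
    rw [LinearMap.comp_apply, LinearMap.comp_apply, hx0, map_zero] at h
    exact LinearMap.mem_ker.mpr h.symm
  have hmapT : ((ker σ2).comap d2).map σ3 = ker d2 ⊓ range σ3 := by
    apply le_antisymm
    · rintro _ ⟨x, hx, rfl⟩
      refine Submodule.mem_inf.mpr ⟨LinearMap.mem_ker.mpr ?_, ⟨x, rfl⟩⟩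
      have h := LinearMap.congr_fun hcom2 x
      rw [LinearMap.comp_apply, LinearMap.comp_apply] at h
      rw [h]
      exact LinearMap.mem_ker.mp (Submodule.mem_comap.mp hx)
    · rintro w hw
      obtain ⟨hw1, c, rfl⟩ := Submodule.mem_inf.mp hw
      refine ⟨c, Submodule.mem_comap.mpr (LinearMap.mem_ker.mpr ?_), rfl⟩
      have h := LinearMap.congr_fun hcom2 c
      rw [LinearMap.comp_apply, LinearMap.comp_apply] at h
      rw [← h]
      exact LinearMap.mem_ker.mp hw1
  have e2 := smith_RN d2 ((ker σ2).comap d2)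
  have hmapd2T : ((ker σ2).comap d2).map d2 = range d2 ⊓ ker σ2 :=
    Submodule.map_comap_eq d2 (ker σ2)
  have hkerd2T : ker d2 ⊓ (ker σ2).comap d2 = ker d2 := by
    rw [inf_eq_left]
    intro x hx
    have hx0 : d2 x = 0 := LinearMap.mem_ker.mp hx
    exact Submodule.mem_comap.mpr (by rw [hx0]; exact (ker σ2).zero_mem)
  rw [hK3T, hmapT] at e1
  rw [hmapd2T, hkerd2T] at e2
  have br1 : finrank 𝕜 ↥(ker σ2 ⊓ range d2) = finrank 𝕜 ↥(range d2 ⊓ ker σ2) := by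
    rw [inf_comm]
  have e5 := smith_RN d2 (ker σ3)
  have e6 := smith_RN σ3 (ker d2)
  have h6 : (range σ4).map d3 ≤ (ker d2).map σ3 := by
    rintro _ ⟨_, ⟨y, rfl⟩, rfl⟩
    refine ⟨d3 y, LinearMap.mem_ker.mpr (LinearMap.congr_fun hdd2 y), ?_⟩
    exact (LinearMap.congr_fun hcom3 y).symm
  have h6' := Submodule.finrank_mono h6
  have br2 : finrank 𝕜 ↥(ker σ3 ⊓ ker d2) = finrank 𝕜 ↥(ker d2 ⊓ ker σ3) := by
    rw [inf_comm]
  omega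

private lemma smith_sum_telescope (N : ℕ) (u v zS rS : ℤ → ℕ)
    (per : ∀ n : ℤ, u n + zS n + rS (n+1+1) ≤ v n + rS (n+1) + zS (n+1))
    (h1 : zS ((N:ℤ)+1) = 0) (h2 : rS 0 ≤ zS (-1)) :
    ∑ n ∈ Finset.Icc (-1:ℤ) (N:ℤ), u n ≤ ∑ n ∈ Finset.Icc (-1:ℤ) (N:ℤ), v n := by
  have hsum := Finset.sum_le_sum (s := Finset.Icc (-1:ℤ) (N:ℤ))
    (f := fun n => u n + zS n + rS (n+1+1)) (g := fun n => v n + rS (n+1) + zS (n+1))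
    (fun n _ => per n)
  rw [Finset.sum_add_distrib, Finset.sum_add_distrib, Finset.sum_add_distrib,
    Finset.sum_add_distrib] at hsum
  have shift : ∀ (g : ℤ → ℕ) (k a b : ℤ), ∑ n ∈ Finset.Icc a b, g (n + k)
      = ∑ n ∈ Finset.Icc (a+k) (b+k), g n := by
    intro g k a b
    rw [← Finset.map_add_right_Icc, Finset.sum_map]
    rfl
  have e0 : ((-1:ℤ)+1) = 0 := by norm_num
  have e0' : ((-1:ℤ)+2) = 1 := by norm_num
  have s1 : ∑ n ∈ Finset.Icc (-1:ℤ) (N:ℤ), zS (n+1)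
      = ∑ n ∈ Finset.Icc (0:ℤ) ((N:ℤ)+1), zS n := by
    rw [shift zS 1 (-1) (N:ℤ), e0]
  have s2 : ∑ n ∈ Finset.Icc (-1:ℤ) (N:ℤ), rS (n+1)
      = ∑ n ∈ Finset.Icc (0:ℤ) ((N:ℤ)+1), rS n := by
    rw [shift rS 1 (-1) (N:ℤ), e0]
  have s3 : ∑ n ∈ Finset.Icc (-1:ℤ) (N:ℤ), rS (n+1+1)
      = ∑ n ∈ Finset.Icc (1:ℤ) ((N:ℤ)+2), rS n := by
    have s3a : ∑ n ∈ Finset.Icc (-1:ℤ) (N:ℤ), rS (n+1+1)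
        = ∑ n ∈ Finset.Icc (-1:ℤ) (N:ℤ), rS (n+2) :=
      Finset.sum_congr rfl (fun n _ => congrArg rS (by ring))
    rw [s3a, shift rS 2 (-1) (N:ℤ), e0']
  rw [s1, s2, s3] at hsum
  have d1 : ∀ g : ℤ → ℕ, ∑ n ∈ Finset.Icc (-1:ℤ) (N:ℤ), g n
      = g (-1) + ∑ n ∈ Finset.Icc (0:ℤ) (N:ℤ), g n := by
    intro g
    rw [show Finset.Icc (-1:ℤ) (N:ℤ) = insert (-1:ℤ) (Finset.Icc 0 (N:ℤ)) by
      ext x; simp only [Finset.mem_Icc, Finset.mem_insert]; omega]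
    rw [Finset.sum_insert (by intro h; rw [Finset.mem_Icc] at h; omega)]
  have d2 : ∀ g : ℤ → ℕ, ∑ n ∈ Finset.Icc (0:ℤ) ((N:ℤ)+1), g n
      = g ((N:ℤ)+1) + ∑ n ∈ Finset.Icc (0:ℤ) (N:ℤ), g n := by
    intro g
    rw [show Finset.Icc (0:ℤ) ((N:ℤ)+1) = insert ((N:ℤ)+1) (Finset.Icc 0 (N:ℤ)) by
      ext x; simp only [Finset.mem_Icc, Finset.mem_insert]; omega]
    rw [Finset.sum_insert (by intro h; rw [Finset.mem_Icc] at h; omega)]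
  have d3 : ∑ n ∈ Finset.Icc (1:ℤ) ((N:ℤ)+2), rS n
      = rS ((N:ℤ)+2) + (rS ((N:ℤ)+1) + ∑ n ∈ Finset.Icc (1:ℤ) (N:ℤ), rS n) := by
    rw [show Finset.Icc (1:ℤ) ((N:ℤ)+2)
        = insert ((N:ℤ)+2) (insert ((N:ℤ)+1) (Finset.Icc 1 (N:ℤ))) by
      ext x; simp only [Finset.mem_Icc, Finset.mem_insert]; omega]
    rw [Finset.sum_insert (by
        intro h; simp only [Finset.mem_insert, Finset.mem_Icc] at h; omega),
      Finset.sum_insert (by intro h; rw [Finset.mem_Icc] at h; omega)]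
  have d4 : ∑ n ∈ Finset.Icc (0:ℤ) (N:ℤ), rS n
      = rS 0 + ∑ n ∈ Finset.Icc (1:ℤ) (N:ℤ), rS n := by
    rw [show Finset.Icc (0:ℤ) (N:ℤ) = insert (0:ℤ) (Finset.Icc 1 (N:ℤ)) by
      ext x; simp only [Finset.mem_Icc, Finset.mem_insert]; omega]
    rw [Finset.sum_insert (by intro h; rw [Finset.mem_Icc] at h; omega)]
  rw [d1 u, d1 v, d1 zS, d2 zS, d2 rS, d3, d4] at hsum
  have g1 := d1 u
  have g2 := d1 v
  omega

end SmithHelpers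

/-- Smith inequality.  Since singular homology of topological spaces is
not available in Mathlib, we formalize the finite ℤ/2-CW complex `X` through its
equivariant cellular chain complex over `𝔽₂ = ZMod 2`: a bounded chain complex
`C` of finite-dimensional `𝔽₂`-vector spaces with a chain involution `τ`
(the cellular ℤ/2-action), whose fixed subcomplex `Fx` corresponds to the
fixed-point set `X^{ℤ/2}` (the cells are permuted freely away from the fixed
subcomplex: `Fx n ⊓ im (1+τ) = ⊥` and `Fx n ⊔ im (1+τ) = ker (τ - 1)`).
The conclusion is the Smith inequality: the total dimension of the homology of the
fixed subcomplex (computing `H_*(X^{ℤ/2}; 𝔽₂)`) is at most the total dimension of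
the homology of `C` (computing `H_*(X; 𝔽₂)`). -/
theorem stmt3 (N : ℕ) (C : ℤ → Type*)
    [∀ n, AddCommGroup (C n)] [∀ n, Module (ZMod 2) (C n)]
    [∀ n, Module.Finite (ZMod 2) (C n)]
    (hvanish : ∀ n : ℤ, (n < 0 ∨ (N : ℤ) < n) → Subsingleton (C n))
    (d : ∀ n : ℤ, C (n + 1) →ₗ[ZMod 2] C n)
    (hdd : ∀ n : ℤ, (d n).comp (d (n + 1)) = 0)
    (τ : ∀ n : ℤ, C n →ₗ[ZMod 2] C n)
    (hτ : ∀ n : ℤ, (τ n).comp (τ n) = LinearMap.id)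
    (hcom : ∀ n : ℤ, (d n).comp (τ (n + 1)) = (τ n).comp (d n))
    (Fx : ∀ n : ℤ, Submodule (ZMod 2) (C n))
    (hFfix : ∀ n : ℤ, ∀ x ∈ Fx n, τ n x = x)
    (hFsub : ∀ n : ℤ, ∀ x ∈ Fx (n + 1), d n x ∈ Fx n)
    (hfree1 : ∀ n : ℤ,
      Fx n ⊓ LinearMap.range (τ n + (LinearMap.id : C n →ₗ[ZMod 2] C n)) = ⊥)
    (hfree2 : ∀ n : ℤ,
      Fx n ⊔ LinearMap.range (τ n + (LinearMap.id : C n →ₗ[ZMod 2] C n)) =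
        LinearMap.ker (τ n - (LinearMap.id : C n →ₗ[ZMod 2] C n))) :
    (∑ n ∈ Finset.Icc (-1 : ℤ) (N : ℤ), Module.finrank (ZMod 2)
        (↥(LinearMap.ker ((d n).restrict (hFsub n))) ⧸
          Submodule.comap (LinearMap.ker ((d n).restrict (hFsub n))).subtype
            (LinearMap.range ((d (n + 1)).restrict (hFsub (n + 1)))))) ≤
    ∑ n ∈ Finset.Icc (-1 : ℤ) (N : ℤ), Module.finrank (ZMod 2)
        (↥(LinearMap.ker (d n)) ⧸
          Submodule.comap (LinearMap.ker (d n)).subtype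
            (LinearMap.range (d (n + 1)))) := by
  classical
  -- characteristic-two facts
  have hchar : ∀ (n : ℤ) (x : C n), x + x = 0 := by
    intro n x
    have h2 : (2 : ZMod 2) = 0 := by decide
    calc x + x = (2 : ZMod 2) • x := (two_smul (ZMod 2) x).symm
      _ = 0 := by rw [h2, zero_smul]
  have hsubid : ∀ n : ℤ, τ n - LinearMap.id = τ n + LinearMap.id := by
    intro n
    refine LinearMap.ext fun x => ?_
    simp only [LinearMap.sub_apply, LinearMap.add_apply, LinearMap.id_apply, sub_eq_add_neg,
      LinearMap.neg_apply, neg_eq_of_add_eq_zero_left (hchar _ x)]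
  have hK : ∀ n : ℤ, LinearMap.ker (τ n + (LinearMap.id : C n →ₗ[ZMod 2] C n))
      = Fx n ⊔ LinearMap.range (τ n + LinearMap.id) := by
    intro n
    have h := hfree2 n
    rw [hsubid n] at h
    exact h.symm
  have hcomσ : ∀ n : ℤ, (d n).comp (τ (n+1) + LinearMap.id)
      = (τ n + LinearMap.id).comp (d n) := by
    intro n
    refine LinearMap.ext fun x => ?_
    have h := LinearMap.congr_fun (hcom n) x
    simp only [LinearMap.comp_apply, LinearMap.add_apply, LinearMap.id_apply, map_add] at h ⊢
    rw [h]
  -- introduce opaque names for the four sequences of dimensions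
  obtain ⟨u, hu⟩ : ∃ u : ℤ → ℕ, u = fun n => Module.finrank (ZMod 2)
        (↥(LinearMap.ker ((d n).restrict (hFsub n))) ⧸
          Submodule.comap (LinearMap.ker ((d n).restrict (hFsub n))).subtype
            (LinearMap.range ((d (n + 1)).restrict (hFsub (n + 1))))) := ⟨_, rfl⟩
  obtain ⟨v, hv⟩ : ∃ v : ℤ → ℕ, v = fun n => Module.finrank (ZMod 2)
        (↥(LinearMap.ker (d n)) ⧸
          Submodule.comap (LinearMap.ker (d n)).subtype
            (LinearMap.range (d (n + 1)))) := ⟨_, rfl⟩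
  obtain ⟨zS, hz⟩ : ∃ zS : ℤ → ℕ, zS = fun m => Module.finrank (ZMod 2)
      ↥(LinearMap.ker (d m) ⊓ LinearMap.range (τ (m+1) + LinearMap.id)) := ⟨_, rfl⟩
  obtain ⟨rS, hr⟩ : ∃ rS : ℤ → ℕ, rS = fun m => Module.finrank (ZMod 2)
      ↥((LinearMap.range (τ (m+1) + LinearMap.id)).map (d m)) := ⟨_, rfl⟩
  rw [← hu, ← hv]
  -- the per-degree inequality
  have per : ∀ n : ℤ, u n + zS n + rS (n+1+1) ≤ v n + rS (n+1) + zS (n+1) := by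
    intro n
    simp only [hu, hv, hz, hr]
    have hF := smith_quot_formula_restrict (d n) (d (n+1)) (hdd n) (hFsub n) (hFsub (n+1))
    have hC := smith_quot_formula (d n) (d (n+1)) (hdd n)
    have key := smith_key_ineq (d n) (d (n+1)) (d (n+1+1))
      (τ n + LinearMap.id) (τ (n+1) + LinearMap.id) (τ (n+1+1) + LinearMap.id)
      (τ (n+1+1+1) + LinearMap.id)
      (Fx n) (Fx (n+1)) (Fx (n+1+1))
      (hdd n) (hdd (n+1)) (hcomσ n) (hcomσ (n+1)) (hcomσ (n+1+1))
      (hK (n+1)) (hK (n+1+1)) (hfree1 n) (hfree1 (n+1)) (hFsub n) (hFsub (n+1))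
    omega
  -- boundary fact 1 : cycles of the σ-subcomplex vanish above the top degree
  have h1 : zS ((N:ℤ)+1) = 0 := by
    simp only [hz]
    haveI hss : Subsingleton (C ((N:ℤ)+1+1)) := hvanish _ (Or.inr (by omega))
    haveI : Subsingleton
        ↥(LinearMap.ker (d ((N:ℤ)+1)) ⊓ LinearMap.range (τ ((N:ℤ)+1+1) + LinearMap.id)) :=
      ⟨fun a b => Subtype.ext (Subsingleton.elim _ _)⟩
    exact Module.finrank_zero_of_subsingleton
  -- boundary fact 2
  have h2 : rS 0 ≤ zS (-1) := by
    simp only [hz, hr]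
    have hker : LinearMap.ker (d (-1)) = ⊤ := by
      haveI hss : Subsingleton (C (-1)) := hvanish _ (Or.inl (by norm_num))
      refine LinearMap.ker_eq_top.mpr ?_
      refine LinearMap.ext fun x => Subsingleton.elim _ _
    have e1 : Module.finrank (ZMod 2)
        ↥(LinearMap.ker (d (-1)) ⊓ LinearMap.range (τ ((-1:ℤ)+1) + LinearMap.id))
        = Module.finrank (ZMod 2) ↥(LinearMap.range (τ ((-1:ℤ)+1) + LinearMap.id)) := by
      rw [hker, top_inf_eq]
    have e2 : ((-1 : ℤ)) + 1 = 0 := by norm_num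
    have gen : ∀ (a b : ℤ), a = b →
        Module.finrank (ZMod 2) ↥(LinearMap.range (τ a + LinearMap.id))
        = Module.finrank (ZMod 2) ↥(LinearMap.range (τ b + LinearMap.id)) := by
      rintro a b rfl; rfl
    have e3 := gen _ _ e2
    have e4 : (LinearMap.range (τ ((0:ℤ)+1) + LinearMap.id)).map (d 0)
        ≤ LinearMap.range (τ (0:ℤ) + LinearMap.id) := by
      rintro _ ⟨_, ⟨y, rfl⟩, rfl⟩
      exact ⟨d 0 y, (LinearMap.congr_fun (hcomσ 0) y).symm⟩
    calc Module.finrank (ZMod 2) ↥((LinearMap.range (τ ((0:ℤ)+1) + LinearMap.id)).map (d 0))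
        ≤ Module.finrank (ZMod 2) ↥(LinearMap.range (τ (0:ℤ) + LinearMap.id)) :=
          Submodule.finrank_mono e4
      _ = _ := by rw [← e3, ← e1]
  exact smith_sum_telescope N u v zS rS per h1 h2
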